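/- Let z < -4/27 be real, let x > 0 be the real root of 1 + t + z t^3 and y = r e^{iθ} (r > 0, θ ∈ (0,π)) its non-real upper-half-plane root. Then θ ∈ (2π/3, π), r = (1 - 4cos²θ)/(2cos θ), and x = 4cos²θ - 1. -/
import Mathlib


open Complex Real

/-- with `x > 0` the real root and `y = r e^{iθ}` the upper half-plane
root of `1 + t + z t³` for `z < -4/27`, one has `θ ∈ (2π/3, π)`,
`r = (1 - 4cos²θ)/(2cos θ)` and `x = 4cos²θ - 1`. -/
theorem roots_data (z x r θ : ℝ) (hz : z < -4 / 27) (hxpos : 0 < x)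
    (hx : z * x ^ 3 + x + 1 = 0) (hr : 0 < r) (hθ : θ ∈ Set.Ioo 0 π)
    (hy : (z : ℂ) * (r * Complex.exp (θ * Complex.I)) ^ 3
        + r * Complex.exp (θ * Complex.I) + 1 = 0) :
    θ ∈ Set.Ioo (2 * π / 3) π ∧
      r = (1 - 4 * Real.cos θ ^ 2) / (2 * Real.cos θ) ∧
      x = 4 * Real.cos θ ^ 2 - 1 := by
  obtain ⟨hθ0, hθπ⟩ := hθ
  set c := Real.cos θ with hc
  set s := Real.sin θ with hsdef
  have hs : 0 < s := Real.sin_pos_of_pos_of_lt_pi hθ0 hθπ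
  have hz0 : z < 0 := by linarith
  have pyth : s ^ 2 + c ^ 2 = 1 := Real.sin_sq_add_cos_sq θ
  have hexp : Complex.exp (θ * Complex.I) = (c : ℂ) + (s : ℂ) * Complex.I := by
    rw [Complex.exp_mul_I, ← Complex.ofReal_cos, ← Complex.ofReal_sin]
  clear_value c s
  rw [hexp] at hy
  have hre := congrArg Complex.re hy
  have him := congrArg Complex.im hy
  simp [Complex.ext_iff, pow_succ, Complex.add_re, Complex.add_im, Complex.mul_re,
    Complex.mul_im] at hre him
  -- e3 : z * r^2 * (4c²-1) = -1
  have key : r * s * (z * r ^ 2 * (4 * c ^ 2 - 1) + 1) = 0 := by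
    linear_combination him + z * r ^ 3 * s * pyth
  have e3 : z * r ^ 2 * (4 * c ^ 2 - 1) = -1 := by
    rcases mul_eq_zero.mp key with h | h
    · exact absurd h (by positivity)
    · linarith
  have e4 : z * r ^ 3 * c = 1 / 2 := by
    linear_combination (-1/2 : ℝ) * hre + (1/2 : ℝ) * c * r * e3 - (3/2 : ℝ) * z * r ^ 3 * c * pyth
  have hzr2 : z * r ^ 2 < 0 := by nlinarith
  have hc14 : 0 < 4 * c ^ 2 - 1 := by nlinarith
  have hzr3 : z * r ^ 3 < 0 := by nlinarith
  have hcneg : c < 0 := by nlinarith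
  have hclt : c < -(1 / 2) := by nlinarith
  have hcos23 : Real.cos (2 * π / 3) = -(1 / 2) := by
    rw [show (2 * π / 3) = π - π / 3 by ring, Real.cos_pi_sub, Real.cos_pi_div_three]
  have hθlt : 2 * π / 3 < θ := by
    by_contra h
    push_neg at h
    have := Real.cos_le_cos_of_nonneg_of_le_pi (le_of_lt hθ0) (by linarith [Real.pi_pos]) h
    rw [hcos23, ← hc] at this
    linarith
  have h2rc : 2 * r * c = 1 - 4 * c ^ 2 := by
    linear_combination (2 * r * c) * e3 - (2 * (4 * c ^ 2 - 1)) * e4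
  have hrval : r = (1 - 4 * c ^ 2) / (2 * c) := by
    rw [eq_div_iff (by intro h0; nlinarith : (2 : ℝ) * c ≠ 0)]
    linear_combination h2rc
  -- x = -2 r c
  have hxC : (z : ℂ) * (x : ℂ) ^ 3 + (x : ℂ) + 1 = 0 := by exact_mod_cast congrArg (fun t : ℝ => (t : ℂ)) hx
  have hfac : ((x : ℂ) - (r : ℂ) * ((c : ℂ) + (s : ℂ) * Complex.I)) *
      ((z : ℂ) * ((x : ℂ) ^ 2 + (x : ℂ) * ((r : ℂ) * ((c : ℂ) + (s : ℂ) * Complex.I))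
        + ((r : ℂ) * ((c : ℂ) + (s : ℂ) * Complex.I)) ^ 2) + 1) = 0 := by
    linear_combination hxC - hy
  have hne : (x : ℂ) - (r : ℂ) * ((c : ℂ) + (s : ℂ) * Complex.I) ≠ 0 := by
    intro h0
    have := congrArg Complex.im h0
    simp [Complex.mul_im] at this
    rcases this with h | h
    · linarith
    · linarith
  have hq := (mul_eq_zero.mp hfac).resolve_left hne
  have him2 := congrArg Complex.im hq
  simp [Complex.ext_iff, pow_succ, Complex.add_im, Complex.mul_im, Complex.mul_re] at him2
  have hx2rc : x = -(2 * r * c) := by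
    rcases him2 with h | h
    · exact absurd h (ne_of_lt hz0)
    · have hrs : (0:ℝ) < r * s := mul_pos hr hs
      have h' : (r * s) * (x + 2 * r * c) = 0 := by linear_combination h
      rcases mul_eq_zero.mp h' with h'' | h''
      · exact absurd h'' (ne_of_gt hrs)
      · linarith
  refine ⟨⟨hθlt, hθπ⟩, hrval, by linarith⟩
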